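/- If P is a temporal beer path from x to y within [t_α, t_ω] through beer vertex b at active time t, Q its x-b prefix and R its b-y suffix, and R' is a temporal b-y path with dist(R') ≤ dist(R) and start(R') ≥ start(R), then the concatenation of Q with R' is a temporal beer path from x to y within [t_α, t_ω] through b at time t, with dist(Q) + dist(R') ≤ dist(P). -/

import Mathlib

open scoped Classical

structure TEdge (V : Type) where
  src : V
  dst : V
  t : ℝ
  len : ℝ

variable {V : Type}

/-- Consecutive compatibility of temporal edges. -/
def compat (e f : TEdge V) : Prop := e.dst = f.src ∧ e.t + e.len ≤ f.t

/-- A temporal path from `x` to `y`: a nonempty list of temporal edges of `E`,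
starting at `x`, ending at `y`, consecutively compatible. -/
def IsPath (E : Set (TEdge V)) (x y : V) (p : List (TEdge V)) : Prop :=
  p ≠ [] ∧ (∀ e ∈ p, e ∈ E) ∧ p.head?.map TEdge.src = some x ∧
    p.getLast?.map TEdge.dst = some y ∧ List.Chain' compat p

/-- Starting time of a temporal path. -/
def startT (p : List (TEdge V)) : ℝ := ((p.head?).map TEdge.t).getD 0

/-- Ending (arrival) time of a temporal path. -/
def endT (p : List (TEdge V)) : ℝ := ((p.getLast?).map (fun e => e.t + e.len)).getD 0

/-- Distance (sum of traversal times) of a temporal path. -/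
def distT (p : List (TEdge V)) : ℝ := (p.map TEdge.len).sum

/-- `p = q ++ r` witnesses a visit of beer vertex `b` at time `t`:
`b` is the endpoint of `q` (or the source `x` if `q` is empty), `t` is no
earlier than the arrival of the last edge of `q` and no later than the
departure of the first edge of `r`. -/
def BeerSplit (x b : V) (t : ℝ) (p q r : List (TEdge V)) : Prop :=
  p = q ++ r ∧ ((q.getLast?).map TEdge.dst).getD x = b ∧
    (∀ e ∈ q.getLast?, e.t + e.len ≤ t) ∧ (∀ e ∈ r.head?, t ≤ e.t)

/-- A temporal beer path from `x` to `y`: a temporal path visiting some active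
beer vertex `b ∈ B` at some time `t ∈ T b` between the arrival at `b` and the
departure from `b`. -/
def IsBeerPath (E : Set (TEdge V)) (B : Set V) (T : V → Set ℝ) (x y : V)
    (p : List (TEdge V)) : Prop :=
  IsPath E x y p ∧ ∃ b ∈ B, ∃ t ∈ T b, ∃ q r, BeerSplit x b t p q r

/-- The path `p` starts no earlier than `tα` and ends no later than `tω`. -/
def InWin (tα tω : ℝ) (p : List (TEdge V)) : Prop :=
  tα ≤ startT p ∧ endT p ≤ tω

/-- Exchange lemma for shortest beer paths: if `p = q ++ r` is a temporal beer
path from `x` to `y` within `[tα, tω]` through beer vertex `b` at active time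
`t`, and `R'` is a temporal `b`-`y` path within `[tα, tω]` with
`distT R' ≤ distT r` and `startT r ≤ startT R'`, then `q ++ R'` is a temporal
beer path from `x` to `y` within `[tα, tω]` through `b` at time `t`, with
`distT q + distT R' ≤ distT p`. -/
theorem stmt16 (E : Set (TEdge V)) (B : Set V) (T : V → Set ℝ)
    (x y b : V) (t tα tω : ℝ) (p q r R' : List (TEdge V))
    (hb : b ∈ B) (ht : t ∈ T b)
    (hp : IsPath E x y p) (hwin : InWin tα tω p)
    (hsplit : p = q ++ r) (hrne : r ≠ [])
    (hqb : ((q.getLast?).map TEdge.dst).getD x = b)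
    (harr : ∀ e ∈ q.getLast?, e.t + e.len ≤ t)
    (hdep : ∀ e ∈ r.head?, t ≤ e.t)
    (hR' : IsPath E b y R') (hR'win : InWin tα tω R')
    (hdist : distT R' ≤ distT r) (hs : startT r ≤ startT R') :
    IsBeerPath E B T x y (q ++ R') ∧ InWin tα tω (q ++ R') ∧
    BeerSplit x b t (q ++ R') q R' ∧
    distT q + distT R' ≤ distT p := by

  obtain ⟨hpne, hpE, hphead, hplast, hpchain⟩ := hp
  obtain ⟨hRne, hRE, hRhead, hRlast, hRchain⟩ := hR'
  obtain ⟨e', R'', hR''⟩ : ∃ e' R'', R' = e' :: R'' := by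
    cases R' with
    | nil => exact absurd rfl hRne
    | cons a l => exact ⟨a, l, rfl⟩
  obtain ⟨e0, r0, hr0⟩ : ∃ e0 r0, r = e0 :: r0 := by
    cases r with
    | nil => exact absurd rfl hrne
    | cons a l => exact ⟨a, l, rfl⟩
  have he'src : e'.src = b := by
    rw [hR''] at hRhead; simpa using hRhead
  -- t ≤ startT R'
  have hts : t ≤ startT R' := by
    have h1 : t ≤ e0.t := hdep e0 (by rw [hr0]; rfl)
    have h2 : startT r = e0.t := by rw [hr0]; rfl
    linarith [hs, h2 ▸ h1]
  have htE : t ≤ e'.t := by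
    have : startT R' = e'.t := by rw [hR'']; rfl
    linarith [this ▸ hts]
  -- chain of q ++ R'
  have hqchain : List.Chain' compat q := by
    rw [hsplit, List.Chain', List.isChain_append] at hpchain; exact hpchain.1
  have hchain : List.Chain' compat (q ++ R') := by
    rw [List.Chain', List.isChain_append]
    refine ⟨hqchain, hRchain, ?_⟩
    intro a ha c hc
    rw [hR''] at hc
    simp only [List.head?_cons, Option.mem_def, Option.some.injEq] at hc
    subst hc
    constructor
    · have : ((q.getLast?).map TEdge.dst).getD x = a.dst := by
        simp [Option.mem_def] at ha
        rw [ha]; rfl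
      rw [he'src, ← hqb, this]
    · exact le_trans (harr a ha) htE
  -- head of q ++ R'
  have hhead : (q ++ R').head?.map TEdge.src = some x := by
    cases q with
    | nil =>
      have hxb : x = b := by simpa using hqb
      rw [hxb]
      simpa using hRhead
    | cons a l =>
      have : p.head? = some a := by rw [hsplit]; rfl
      rw [this] at hphead
      simpa using hphead
  -- last of q ++ R'
  have hlast : (q ++ R').getLast?.map TEdge.dst = some y := by
    rw [List.getLast?_append]
    have : R'.getLast? = some (R'.getLast hRne) := List.getLast?_eq_getLast hRne
    rw [this]
    rw [this] at hRlast
    simpa using hRlast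
  have hpath : IsPath E x y (q ++ R') := by
    refine ⟨by simp [hR''], ?_, hhead, hlast, hchain⟩
    intro e he
    rcases List.mem_append.mp he with h | h
    · exact hpE e (by rw [hsplit]; exact List.mem_append.mpr (Or.inl h))
    · exact hRE e h
  have hbs : BeerSplit x b t (q ++ R') q R' := ⟨rfl, hqb, harr, by
    intro e he
    rw [hR''] at he
    simp only [List.head?_cons, Option.mem_def, Option.some.injEq] at he
    subst he; exact htE⟩
  have hwin' : InWin tα tω (q ++ R') := by
    constructor
    · cases q with
      | nil => simpa using hR'win.1
      | cons a l =>
        have h1 : startT ((a :: l) ++ R') = a.t := rfl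
        have h2 : startT p = a.t := by rw [hsplit]; rfl
        rw [h1, ← h2]; exact hwin.1
    · have : endT (q ++ R') = endT R' := by
        unfold endT
        rw [List.getLast?_append, List.getLast?_eq_getLast hRne]
        rfl
      rw [this]; exact hR'win.2
  refine ⟨⟨hpath, b, hb, t, ht, q, R', hbs⟩, hwin', hbs, ?_⟩
  have : distT p = distT q + distT r := by
    rw [hsplit]; unfold distT; simp
  linarith
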